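/- The one-stage scheme SE1-TSI is time-symmetric: if U^{n+1/2} = e^{−h∂_τ/(2ε)}U^n + (h/2)φ₁(−h∂_τ/(2ε)) f_τ(U^{n+1/2}) and U^{n+1} = e^{−h∂_τ/ε}U^n + hφ₁(−h∂_τ/ε) f_τ(U^{n+1/2}), then exchanging U^n ↔ U^{n+1} and h ↔ −h yields an equivalent pair of equations (with the same intermediate value U^{n+1/2}). -/

import Mathlib

noncomputable def phi1 (z : ℂ) : ℂ := if z = 0 then 1 else (Complex.exp z - 1) / z

lemma exp_mul_exp_neg (z : ℂ) : Complex.exp z * Complex.exp (-z) = 1 := by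
  rw [← Complex.exp_add]; simp

lemma phi1_exp (z : ℂ) : Complex.exp z * phi1 (-z) = phi1 z := by
  rcases eq_or_ne z 0 with rfl | hz
  · simp [phi1]
  · have hnz : -z ≠ 0 := neg_ne_zero.mpr hz
    simp only [phi1, if_neg hz, if_neg hnz]
    have he := exp_mul_exp_neg z
    field_simp
    linear_combination (-1 : ℂ) * he

lemma phi1_half (z : ℂ) :
    Complex.exp (-z / 2) * phi1 z = (phi1 (-z / 2) + phi1 (z / 2)) / 2 := by
  rcases eq_or_ne z 0 with rfl | hz
  · simp [phi1]
  · have hz2 : z / 2 ≠ 0 := by simpa using hz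
    have hnz2 : -z / 2 ≠ 0 := by simpa using hz
    simp only [phi1, if_neg hz, if_neg hz2, if_neg hnz2]
    have he : Complex.exp (z / 2) * Complex.exp (-z / 2) = 1 := by
      simpa [neg_div] using
        (by rw [← Complex.exp_add]; simp :
          Complex.exp (z / 2) * Complex.exp (-(z / 2)) = 1)
    have hzz : Complex.exp z = Complex.exp (z / 2) * Complex.exp (z / 2) := by
      rw [← Complex.exp_add]; ring_nf
    rw [hzz]
    field_simp
    have hzi : z * z⁻¹ = 1 := mul_inv_cancel₀ hz
    have he' := he
    rw [neg_div] at he'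
    linear_combination Complex.exp (z / 2) * he'

/-- Time symmetry of the SE1-TSI scheme on a single Fourier mode with symbol `z`. -/
theorem SE1TSI_time_symmetric (z h a b c d : ℂ)
    (h1 : a = Complex.exp (-z / 2) * b + (h / 2) * phi1 (-z / 2) * c)
    (h2 : d = Complex.exp (-z) * b + h * phi1 (-z) * c) :
    a = Complex.exp (z / 2) * d - (h / 2) * phi1 (z / 2) * c ∧
      b = Complex.exp z * d - h * phi1 z * c := by
  have hee := exp_mul_exp_neg z
  have hE2 : Complex.exp (-z / 2) * Complex.exp z = Complex.exp (z / 2) := by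
    rw [← Complex.exp_add]; ring_nf
  have hb : b = Complex.exp z * d - h * phi1 z * c := by
    linear_combination (-(Complex.exp z)) * h2 + (-(h * c)) * phi1_exp z + (-b) * hee
  refine ⟨?_, hb⟩
  linear_combination h1 + Complex.exp (-z / 2) * hb + d * hE2 + (-(h * c)) * phi1_half z
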